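/- Fix an integer g ≥ 2, set L = cos(π/(g+1)), and for c > 0 let s(c) = 2·arsinh(L/sinh(c/2)). Let c₀ = 2·arsinh(√L), which is the unique positive solution of ℓ_α(c,0) = 2c. Then for every c ≥ c₀ there exists a unique u ∈ [0,1) such that ℓ_α(c, c·u) = 2c. -/

import Mathlib

set_option maxHeartbeats 1000000


/-- Inverse hyperbolic cosine (for `x ≥ 1`). -/
noncomputable def arcosh (x : ℝ) : ℝ := Real.log (x + Real.sqrt (x ^ 2 - 1))

/-- The seam length `s(c) = 2·arsinh(L / sinh(c/2))`, so that
`sinh(c/2)·sinh(s(c)/2) = L`. -/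
noncomputable def seam (L c : ℝ) : ℝ := 2 * Real.arsinh (L / Real.sinh (c / 2))

/-- The length `ℓ_α(c,t) = 4·arcosh(cosh(s(c)/2)·cosh(t/2))`. -/
noncomputable def ellAlpha (L c t : ℝ) : ℝ :=
  4 * arcosh (Real.cosh (seam L c / 2) * Real.cosh (t / 2))

lemma arcosh_cosh {y : ℝ} (hy : 0 ≤ y) : arcosh (Real.cosh y) = y := by
  unfold arcosh
  have h1 : Real.cosh y ^ 2 - 1 = Real.sinh y ^ 2 := by
    have := Real.cosh_sq y; linarith
  rw [h1, Real.sqrt_sq (Real.sinh_nonneg_iff.2 hy), Real.cosh_add_sinh, Real.log_exp]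

lemma arcosh_strictMonoOn : StrictMonoOn arcosh (Set.Ici 1) := by
  intro x hx y hy hxy
  simp only [Set.mem_Ici] at hx hy
  unfold arcosh
  apply Real.log_lt_log
  · have := Real.sqrt_nonneg (x ^ 2 - 1); linarith
  · have h2 : Real.sqrt (x ^ 2 - 1) ≤ Real.sqrt (y ^ 2 - 1) :=
      Real.sqrt_le_sqrt (by nlinarith)
    linarith

/-- Fix an integer `g ≥ 2`, set `L = cos(π/(g+1))`, and for `c > 0` let
`s(c) = 2·arsinh(L/sinh(c/2))`. Let `c₀ = 2·arsinh(√L)`, which is the unique positive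
solution of `ℓ_α(c,0) = 2c`. Then for every `c ≥ c₀` there exists a unique `u ∈ [0,1)`
such that `ℓ_α(c, c·u) = 2c`. -/
theorem exists_unique_u0 (g : ℕ) (hg : 2 ≤ g) (L : ℝ)
    (hL : L = Real.cos (Real.pi / (g + 1)))
    (c₀ : ℝ) (hc₀ : c₀ = 2 * Real.arsinh (Real.sqrt L)) :
    ∀ c : ℝ, c₀ ≤ c →
      ∃! u : ℝ, u ∈ Set.Ico (0 : ℝ) 1 ∧ ellAlpha L c (c * u) = 2 * c := by
  -- L > 0
  have hπ : (0:ℝ) < Real.pi := Real.pi_pos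
  have hg3 : (3:ℝ) ≤ (g:ℝ) + 1 := by
    have : (2:ℝ) ≤ g := by exact_mod_cast hg
    linarith
  have hLpos : 0 < L := by
    rw [hL]
    apply Real.cos_pos_of_mem_Ioo
    constructor
    · have : 0 < Real.pi / ((g:ℝ) + 1) := by positivity
      linarith
    · have h1 : Real.pi / ((g:ℝ) + 1) ≤ Real.pi / 3 := by
        apply div_le_div_of_nonneg_left hπ.le (by norm_num) hg3
      have h2 : Real.pi / 3 < Real.pi / 2 := by
        apply div_lt_div_of_pos_left hπ (by norm_num) (by norm_num)
      linarith
  have hsL : 0 < Real.sqrt L := Real.sqrt_pos.2 hLpos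
  have hc₀pos : 0 < c₀ := by
    rw [hc₀]
    have := Real.arsinh_pos_iff.2 hsL
    linarith
  intro c hc
  have hcpos : 0 < c := lt_of_lt_of_le hc₀pos hc
  have hsinhc : 0 < Real.sinh (c / 2) := Real.sinh_pos_iff.2 (by linarith)
  -- sinh (c/2) ≥ √L
  have hsinh_ge : Real.sqrt L ≤ Real.sinh (c / 2) := by
    have h1 : Real.sinh (c₀ / 2) ≤ Real.sinh (c / 2) := Real.sinh_le_sinh.2 (by linarith)
    have h2 : Real.sinh (c₀ / 2) = Real.sqrt L := by
      rw [hc₀]; ring_nf; rw [Real.sinh_arsinh]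
    linarith
  -- seam facts
  set x : ℝ := L / Real.sinh (c / 2) with hx
  have hxpos : 0 < x := div_pos hLpos hsinhc
  have hseam2 : seam L c / 2 = Real.arsinh x := by
    unfold seam; ring
  have hseam_nonneg : 0 ≤ seam L c / 2 := by
    rw [hseam2]; exact (Real.arsinh_pos_iff.2 hxpos).le
  have hseam_pos : 0 < seam L c / 2 := by
    rw [hseam2]; exact Real.arsinh_pos_iff.2 hxpos
  -- s ≤ c
  have hseam_le : seam L c / 2 ≤ c / 2 := by
    rw [hseam2]
    have hxle : x ≤ Real.sinh (c / 2) := by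
      rw [hx, div_le_iff₀ hsinhc]
      nlinarith [Real.sq_sqrt hLpos.le]
    calc Real.arsinh x ≤ Real.arsinh (Real.sinh (c / 2)) := Real.arsinh_le_arsinh.2 hxle
      _ = c / 2 := Real.arsinh_sinh _
  set A : ℝ := Real.cosh (seam L c / 2) with hA
  have hA1 : 1 < A := Real.one_lt_cosh.2 (ne_of_gt hseam_pos)
  -- f
  set f : ℝ → ℝ := fun u => ellAlpha L c (c * u) with hf
  have hfval : ∀ u, f u = 4 * arcosh (A * Real.cosh (c * u / 2)) := by
    intro u; rfl
  -- strict mono on Icc 0 1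
  have hmono : StrictMonoOn f (Set.Icc 0 1) := by
    intro u hu v hv huv
    rw [hfval, hfval]
    have hcu : 0 ≤ c * u / 2 := by
      have := hu.1; positivity
    have hcv : c * u / 2 < c * v / 2 := by
      have := hu.1
      have : u < v := huv
      nlinarith
    have hcosh : Real.cosh (c * u / 2) < Real.cosh (c * v / 2) := by
      rw [Real.cosh_lt_cosh, abs_of_nonneg hcu, abs_of_nonneg (by linarith)]
      exact hcv
    have h1u : (1:ℝ) ≤ A * Real.cosh (c * u / 2) := by
      nlinarith [Real.one_le_cosh (c * u / 2)]
    have h1v : (1:ℝ) ≤ A * Real.cosh (c * v / 2) := by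
      nlinarith [Real.one_le_cosh (c * v / 2)]
    have := arcosh_strictMonoOn h1u h1v (by nlinarith)
    linarith
  -- endpoint values
  have hf0 : f 0 ≤ 2 * c := by
    rw [hfval]
    simp only [mul_zero, zero_div, Real.cosh_zero, mul_one]
    rw [hA, arcosh_cosh hseam_nonneg]
    linarith
  have hf1 : 2 * c < f 1 := by
    rw [hfval]
    have hc2 : (1:ℝ) ≤ Real.cosh (c * 1 / 2) := Real.one_le_cosh _
    have h1 : Real.cosh (c * 1 / 2) < A * Real.cosh (c * 1 / 2) := by nlinarith
    have h2 := arcosh_strictMonoOn (Set.mem_Ici.2 hc2)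
      (Set.mem_Ici.2 (by nlinarith)) h1
    have harc : arcosh (Real.cosh (c * 1 / 2)) = c / 2 := by
      rw [arcosh_cosh (by linarith : (0:ℝ) ≤ c * 1 / 2)]; ring
    rw [harc] at h2
    linarith
  -- continuity
  have hcont : ContinuousOn f (Set.Icc 0 1) := by
    have hG : Continuous (fun u : ℝ => A * Real.cosh (c * u / 2)) := by
      continuity
    have hGpos : ∀ u : ℝ, 0 < A * Real.cosh (c * u / 2) := by
      intro u; nlinarith [Real.one_le_cosh (c * u / 2)]
    have hcf : Continuous f := by
      have h1 : Continuous fun u : ℝ =>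
          4 * Real.log (A * Real.cosh (c * u / 2) +
            Real.sqrt ((A * Real.cosh (c * u / 2)) ^ 2 - 1)) := by
        apply Continuous.mul continuous_const
        apply Continuous.log
        · exact hG.add ((hG.pow 2).sub continuous_const).sqrt
        · intro u
          have := Real.sqrt_nonneg ((A * Real.cosh (c * u / 2)) ^ 2 - 1)
          have := hGpos u
          positivity
      convert h1 using 1
      exact funext hfval
    exact hcf.continuousOn
  -- existence
  have hmem : 2 * c ∈ Set.Ico (f 0) (f 1) := ⟨hf0, hf1⟩
  obtain ⟨u, hu, hfu⟩ := intermediate_value_Ico (by norm_num : (0:ℝ) ≤ 1) hcont hmem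
  refine ⟨u, ⟨hu, hfu⟩, ?_⟩
  rintro v ⟨hv, hfv⟩
  exact hmono.injOn (Set.mem_Icc.2 ⟨hv.1, hv.2.le⟩) (Set.mem_Icc.2 ⟨hu.1, hu.2.le⟩)
    (by show f v = f u; rw [hfu]; exact hfv)
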